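/- Let n ≥ 1, s ∈ (0,1), and let φ be a Schwartz function on ℝⁿ. Then for every multi-index α there is a constant C_α such that |D^α ψ(x)| ≤ C_α (1+|x|)^{−(n+s)} for all x ∈ ℝⁿ, where ψ(x) = ∫_{ℝⁿ} ((x_j − y_j)/|x−y|) · (φ(x) − φ(y))/|x−y|^{n+s} dy is (up to a constant factor) the j-th fractional Riesz derivative ∇^s_j φ. -/

import Mathlib

open MeasureTheory Real Metric Set Filter Pointwise
open scoped ENNReal

namespace FracAux

variable {n : ℕ} {s : ℝ}

local notation "E" => EuclideanSpace ℝ (Fin n)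

lemma abs_coord_le_norm (z : E) (j : Fin n) : |z j| ≤ ‖z‖ := by
  rw [EuclideanSpace.norm_eq]
  rw [← Real.sqrt_sq (abs_nonneg (z j))]
  apply Real.sqrt_le_sqrt
  rw [sq_abs]
  exact Finset.single_le_sum (f := fun i => ‖z i‖ ^ 2) (fun i _ => by positivity) (Finset.mem_univ j) |>.trans_eq' (by rw [Real.norm_eq_abs, sq_abs])

/-- The Riesz kernel. -/
noncomputable def K (n : ℕ) (s : ℝ) (j : Fin n) (z : EuclideanSpace ℝ (Fin n)) : ℝ :=
  z j / (‖z‖ * ‖z‖ ^ ((n : ℝ) + s))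

lemma K_measurable (j : Fin n) : Measurable (K n s j) := by
  unfold K
  fun_prop

lemma sub_coord (x y : E) (j : Fin n) : (x - y) j = x j - y j := rfl

lemma abs_K_le (hs0 : 0 < s) (j : Fin n) (z : E) :
    |K n s j z| ≤ ‖z‖ ^ (-((n : ℝ) + s)) := by
  have hns : (0:ℝ) < (n : ℝ) + s := by positivity
  rcases eq_or_ne z 0 with rfl | hz
  · have h1 : K n s j (0:E) = 0 := by simp [K]
    rw [h1, abs_zero, norm_zero, Real.zero_rpow (neg_ne_zero.2 hns.ne')]
  · have hz0 : 0 < ‖z‖ := norm_pos_iff.2 hz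
    have hpow : 0 < ‖z‖ ^ ((n:ℝ)+s) := Real.rpow_pos_of_pos hz0 _
    rw [K, abs_div, abs_of_pos (mul_pos hz0 hpow), Real.rpow_neg hz0.le]
    rw [div_le_iff₀ (by positivity)]
    calc |z j| ≤ ‖z‖ := abs_coord_le_norm z j
    _ = (‖z‖ ^ ((n:ℝ)+s))⁻¹ * (‖z‖ * ‖z‖ ^ ((n:ℝ)+s)) := by
        field_simp



lemma finrankE : Module.finrank ℝ (EuclideanSpace ℝ (Fin n)) = n := by simp

lemma integrableOn_rpow_ball (hn : 1 ≤ n) {a : ℝ} (han : -(n:ℝ) < a) (ha : a < 0)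
    {R : ℝ} (hR : 0 < R) :
    IntegrableOn (fun z : E => ‖z‖ ^ a) (ball 0 R) := by
  have : Nonempty (Fin n) := ⟨⟨0, hn⟩⟩
  have : Nontrivial (EuclideanSpace ℝ (Fin n)) := inferInstance
  have hmeas : Measurable fun z : E => ‖z‖ ^ a := by fun_prop
  have hnonneg : ∀ z : E, 0 ≤ ‖z‖ ^ a := fun z => Real.rpow_nonneg (norm_nonneg _) a
  constructor
  · exact hmeas.aestronglyMeasurable
  · rw [hasFiniteIntegral_iff_ofReal (Eventually.of_forall hnonneg)]
    set μ := volume.restrict (ball (0:E) R) with hμ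
    rw [lintegral_eq_lintegral_meas_le μ (Eventually.of_forall hnonneg) hmeas.aemeasurable]
    set g := fun t : ℝ => μ {z : E | t ≤ ‖z‖ ^ a} with hg
    have hball : ∀ t : ℝ, g t ≤ volume (ball (0:E) R) := fun t => by
      simpa [hμ] using (measure_mono (subset_univ _)).trans
        (le_of_eq (Measure.restrict_apply_univ _))
    have hcb : ∀ t : ℝ, 0 < t → g t ≤ volume (closedBall (0:E) (t ^ a⁻¹)) := by
      intro t ht
      refine le_trans (Measure.restrict_le_self _) (measure_mono ?_)
      intro z hz
      simp only [mem_setOf_eq] at hz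
      rcases eq_or_ne z 0 with rfl | hz0
      · exfalso
        rw [norm_zero, Real.zero_rpow ha.ne] at hz
        exact absurd (ht.trans_le hz) (lt_irrefl 0)
      · have hz0' : 0 < ‖z‖ := norm_pos_iff.2 hz0
        rw [mem_closedBall_zero_iff]
        exact (Real.le_rpow_inv_iff_of_neg hz0' ht ha).2 hz
    calc
      ∫⁻ t in Ioi 0, g t ≤ ∫⁻ t in Ioc 0 1 ∪ Ioi 1, g t :=
        lintegral_mono_set Ioi_subset_Ioc_union_Ioi
      _ ≤ (∫⁻ t in Ioc 0 1, g t) + ∫⁻ t in Ioi 1, g t := lintegral_union_le _ _ _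
      _ < ∞ := ENNReal.add_lt_top.2 ⟨?_, ?_⟩
    · calc (∫⁻ t in Ioc 0 1, g t) ≤ ∫⁻ _ in Ioc (0:ℝ) 1, volume (ball (0:E) R) :=
            lintegral_mono fun t => hball t
        _ = volume (ball (0:E) R) * volume (Ioc (0:ℝ) 1) := by
            rw [setLIntegral_const]
        _ < ∞ := by
            apply ENNReal.mul_lt_top measure_ball_lt_top
            simp [Real.volume_Ioc]
    · have key : ∀ t ∈ Ioi (1:ℝ), g t ≤
          ENNReal.ofReal (t ^ (a⁻¹ * n)) * volume (ball (0:E) 1) := by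
        intro t ht
        have ht0 : (0:ℝ) < t := lt_trans zero_lt_one ht
        refine (hcb t ht0).trans (le_of_eq ?_)
        rw [Measure.addHaar_closedBall _ _ (Real.rpow_nonneg ht0.le _), finrankE,
          ← Real.rpow_natCast (t ^ a⁻¹) n, ← Real.rpow_mul ht0.le]
      calc (∫⁻ t in Ioi 1, g t)
          ≤ ∫⁻ t in Ioi (1:ℝ), ENNReal.ofReal (t ^ (a⁻¹ * n)) * volume (ball (0:E) 1) :=
            setLIntegral_mono' measurableSet_Ioi key
        _ = (∫⁻ t in Ioi (1:ℝ), ENNReal.ofReal (t ^ (a⁻¹ * n))) * volume (ball (0:E) 1) := by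
            rw [lintegral_mul_const' _ _ measure_ball_lt_top.ne]
        _ < ∞ := by
            apply ENNReal.mul_lt_top _ measure_ball_lt_top
            have hexp : a⁻¹ * n < -1 := by
              rw [inv_mul_eq_div, div_lt_iff_of_neg ha]
              linarith
            exact (integrableOn_Ioi_rpow_of_lt hexp zero_lt_one).setLIntegral_lt_top

lemma finrankE' : Module.finrank ℝ (EuclideanSpace ℝ (Fin n)) = n := by simp

lemma integrableOn_rpow_compl (hn : 1 ≤ n) {a : ℝ} (ha : a < -(n:ℝ)) {R : ℝ} (hR : 0 < R) :
    IntegrableOn (fun z : E => ‖z‖ ^ a) (ball 0 R)ᶜ := by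
  set c : ℝ := (1 + R) / R with hc
  have hc0 : 0 < c := by positivity
  have hint : Integrable (fun z : E => c ^ (-a) * (1 + ‖z‖) ^ a) := by
    have h0 : (Module.finrank ℝ (EuclideanSpace ℝ (Fin n)) : ℝ) < -a := by
      rw [finrankE']; linarith
    have := (integrable_one_add_norm (μ := (volume : Measure (EuclideanSpace ℝ (Fin n)))) h0)
    simpa using this.const_mul (c ^ (-a))
  refine (hint.integrableOn).mono' ((show Measurable fun z : EuclideanSpace ℝ (Fin n) => ‖z‖ ^ a by fun_prop).aestronglyMeasurable.restrict) ?_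
  rw [ae_restrict_iff' measurableSet_ball.compl]
  filter_upwards with z hz
  simp only [mem_compl_iff, mem_ball, dist_zero_right, not_lt] at hz
  have hz0 : 0 < ‖z‖ := lt_of_lt_of_le hR hz
  rw [Real.norm_of_nonneg (Real.rpow_nonneg (norm_nonneg _) a)]
  have h1 : 1 + ‖z‖ ≤ c * ‖z‖ := by
    rw [hc, div_mul_eq_mul_div, le_div_iff₀ hR]
    nlinarith
  have h2 : (c * ‖z‖) ^ a ≤ (1 + ‖z‖) ^ a :=
    Real.rpow_le_rpow_of_nonpos (by positivity) h1 (by linarith)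
  calc ‖z‖ ^ a = c ^ (-a) * (c ^ a * ‖z‖ ^ a) := by
        rw [← mul_assoc, ← Real.rpow_add hc0]
        simp
    _ = c ^ (-a) * (c * ‖z‖) ^ a := by rw [Real.mul_rpow hc0.le hz0.le]
    _ ≤ c ^ (-a) * (1 + ‖z‖) ^ a := by
        have : (0:ℝ) ≤ c ^ (-a) := Real.rpow_nonneg hc0.le _
        nlinarith

lemma smul_ball_compl {R : ℝ} (hR : 0 < R) :
    R • (ball (0:E) 1)ᶜ = (ball (0:E) R)ᶜ := by
  ext z
  rw [mem_smul_set_iff_inv_smul_mem₀ hR.ne']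
  simp only [mem_compl_iff, mem_ball, dist_zero_right, not_lt, norm_smul, norm_inv,
    Real.norm_of_nonneg hR.le]
  rw [le_inv_mul_iff₀ hR, mul_one]

lemma setIntegral_rpow_ball_scale (a : ℝ) {R : ℝ} (hR : 0 < R) :
    ∫ z in ball (0:E) R, ‖z‖ ^ a = R ^ ((n:ℝ) + a) * ∫ z in ball (0:E) 1, ‖z‖ ^ a := by
  have h := Measure.setIntegral_comp_smul_of_pos volume (fun z : E => ‖z‖ ^ a) (ball (0:E) 1) hR
  rw [smul_unitBall_of_pos hR] at h
  have h2 : ∀ x : E, ‖R • x‖ ^ a = R ^ a * ‖x‖ ^ a := fun x => by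
    rw [norm_smul, Real.norm_of_nonneg hR.le, Real.mul_rpow hR.le (norm_nonneg _)]
  simp only [h2] at h
  rw [integral_const_mul, finrankE'] at h
  rw [smul_eq_mul] at h
  have : (∫ z in ball (0:E) R, ‖z‖ ^ a) = (R ^ n) * (R ^ a * ∫ z in ball (0:E) 1, ‖z‖ ^ a) := by
    rw [h, ← mul_assoc, mul_inv_cancel₀ (by positivity : (R:ℝ) ^ n ≠ 0), one_mul]
  rw [this, ← mul_assoc, ← Real.rpow_natCast R n, ← Real.rpow_add hR]

lemma setIntegral_rpow_compl_scale (a : ℝ) {R : ℝ} (hR : 0 < R) :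
    ∫ z in (ball (0:E) R)ᶜ, ‖z‖ ^ a = R ^ ((n:ℝ) + a) * ∫ z in (ball (0:E) 1)ᶜ, ‖z‖ ^ a := by
  have h := Measure.setIntegral_comp_smul_of_pos volume (fun z : E => ‖z‖ ^ a) (ball (0:E) 1)ᶜ hR
  rw [smul_ball_compl hR] at h
  have h2 : ∀ x : E, ‖R • x‖ ^ a = R ^ a * ‖x‖ ^ a := fun x => by
    rw [norm_smul, Real.norm_of_nonneg hR.le, Real.mul_rpow hR.le (norm_nonneg _)]
  simp only [h2] at h
  rw [integral_const_mul, finrankE'] at h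
  rw [smul_eq_mul] at h
  have : (∫ z in (ball (0:E) R)ᶜ, ‖z‖ ^ a) = (R ^ n) * (R ^ a * ∫ z in (ball (0:E) 1)ᶜ, ‖z‖ ^ a) := by
    rw [h, ← mul_assoc, mul_inv_cancel₀ (by positivity : (R:ℝ) ^ n ≠ 0), one_mul]
  rw [this, ← mul_assoc, ← Real.rpow_natCast R n, ← Real.rpow_add hR]

section Piece4

variable {F : Type} [NormedAddCommGroup F] [NormedSpace ℝ F]

/-- The dominating radial bound. -/
noncomputable def B (n : ℕ) (s : ℝ) (z : EuclideanSpace ℝ (Fin n)) : ℝ :=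
  min (‖z‖ ^ (1 - ((n : ℝ) + s))) (‖z‖ ^ (-((n : ℝ) + s)))

lemma B_nonneg (z : E) : 0 ≤ B n s z :=
  le_min (Real.rpow_nonneg (norm_nonneg _) _) (Real.rpow_nonneg (norm_nonneg _) _)

lemma integrable_B (hn : 1 ≤ n) (hs0 : 0 < s) (hs1 : s < 1) :
    Integrable (B n s) (volume : Measure (EuclideanSpace ℝ (Fin n))) := by
  have hmeas : Measurable (B n s) := by
    unfold B; fun_prop
  have h1 : IntegrableOn (B n s) (ball (0:E) 1) := by
    have hn' : (1:ℝ) ≤ (n:ℝ) := by exact_mod_cast hn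
    refine (integrableOn_rpow_ball hn (a := 1 - ((n:ℝ) + s)) (by linarith)
      (by linarith) one_pos).mono' hmeas.aestronglyMeasurable.restrict ?_
    filter_upwards with z
    rw [Real.norm_of_nonneg (B_nonneg z)]
    exact min_le_left _ _
  have h2 : IntegrableOn (B n s) (ball (0:E) 1)ᶜ := by
    refine (integrableOn_rpow_compl hn (a := -((n:ℝ) + s)) (by linarith [hs0]) one_pos).mono' hmeas.aestronglyMeasurable.restrict ?_
    filter_upwards with z
    rw [Real.norm_of_nonneg (B_nonneg z)]
    exact min_le_right _ _
  have := h1.union h2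
  rwa [union_compl_self, integrableOn_univ] at this

lemma rpow_mul_norm (hns : 1 < (n:ℝ) + s) (z : E) :
    ‖z‖ ^ (-((n : ℝ) + s)) * ‖z‖ = ‖z‖ ^ (1 - ((n : ℝ) + s)) := by
  rcases eq_or_ne z 0 with rfl | hz
  · rw [norm_zero, Real.zero_rpow (by linarith), Real.zero_rpow (by linarith), mul_zero]
  · have hz0 : 0 < ‖z‖ := norm_pos_iff.2 hz
    rw [← Real.rpow_add_one hz0.ne' (-((n:ℝ) + s))]
    congr 1
    ring

lemma norm_fderiv_le_seminorm (f : SchwartzMap (EuclideanSpace ℝ (Fin n)) F) (x : E) :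
    ‖fderiv ℝ f x‖ ≤ SchwartzMap.seminorm ℝ 0 1 f := by
  have h1 : ‖fderiv ℝ (⇑f) x‖ = ‖iteratedFDeriv ℝ 1 (⇑f) x‖ := by
    rw [← norm_iteratedFDeriv_fderiv, norm_iteratedFDeriv_zero]
  rw [h1]
  exact SchwartzMap.norm_iteratedFDeriv_le_seminorm ℝ f 1 x

lemma schwartz_lip (f : SchwartzMap (EuclideanSpace ℝ (Fin n)) F) (x y : E) :
    ‖f x - f y‖ ≤ SchwartzMap.seminorm ℝ 0 1 f * ‖x - y‖ :=
  convex_univ.norm_image_sub_le_of_norm_fderiv_le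
    (fun z _ => f.differentiable.differentiableAt)
    (fun z _ => norm_fderiv_le_seminorm f z) (mem_univ y) (mem_univ x)

lemma norm_integrand_le (hn : 1 ≤ n) (hs0 : 0 < s) (j : Fin n)
    (f : SchwartzMap (EuclideanSpace ℝ (Fin n)) F) (x z : E) :
    ‖K n s j z • (f x - f (x - z))‖ ≤
      max (SchwartzMap.seminorm ℝ 0 1 f) (2 * SchwartzMap.seminorm ℝ 0 0 f) * B n s z := by
  have hns : 1 < (n:ℝ) + s := by
    have : (1:ℝ) ≤ n := by exact_mod_cast hn
    linarith
  set M₁ := SchwartzMap.seminorm ℝ 0 1 f with hM₁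
  set M₀ := SchwartzMap.seminorm ℝ 0 0 f with hM₀
  have hM₁0 : 0 ≤ M₁ := apply_nonneg _ _
  have hM₀0 : 0 ≤ M₀ := apply_nonneg _ _
  have hKz := abs_K_le hs0 j z
  have hrpow : (0:ℝ) ≤ ‖z‖ ^ (-((n:ℝ) + s)) := Real.rpow_nonneg (norm_nonneg _) _
  rw [norm_smul, Real.norm_eq_abs]
  have h1 : |K n s j z| * ‖f x - f (x - z)‖ ≤ M₁ * ‖z‖ ^ (1 - ((n:ℝ) + s)) := by
    have := schwartz_lip f x (x - z)
    rw [sub_sub_cancel] at this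
    calc |K n s j z| * ‖f x - f (x - z)‖ ≤ ‖z‖ ^ (-((n:ℝ) + s)) * (M₁ * ‖z‖) := by
          apply mul_le_mul hKz this (norm_nonneg _) hrpow
      _ = M₁ * (‖z‖ ^ (-((n:ℝ) + s)) * ‖z‖) := by ring
      _ = M₁ * ‖z‖ ^ (1 - ((n:ℝ) + s)) := by rw [rpow_mul_norm hns]
  have h2 : |K n s j z| * ‖f x - f (x - z)‖ ≤ 2 * M₀ * ‖z‖ ^ (-((n:ℝ) + s)) := by
    have hfx : ‖f x - f (x - z)‖ ≤ 2 * M₀ := by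
      calc ‖f x - f (x - z)‖ ≤ ‖f x‖ + ‖f (x - z)‖ := norm_sub_le _ _
        _ ≤ M₀ + M₀ := add_le_add (SchwartzMap.norm_le_seminorm ℝ f x)
            (SchwartzMap.norm_le_seminorm ℝ f (x - z))
        _ = 2 * M₀ := by ring
    calc |K n s j z| * ‖f x - f (x - z)‖ ≤ ‖z‖ ^ (-((n:ℝ) + s)) * (2 * M₀) :=
          mul_le_mul hKz hfx (norm_nonneg _) hrpow
      _ = 2 * M₀ * ‖z‖ ^ (-((n:ℝ) + s)) := by ring
  rcases le_total (‖z‖ ^ (1 - ((n:ℝ) + s))) (‖z‖ ^ (-((n:ℝ) + s))) with hmin | hmin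
  · have hB : B n s z = ‖z‖ ^ (1 - ((n:ℝ) + s)) := min_eq_left hmin
    rw [hB]
    refine h1.trans ?_
    have : M₁ ≤ max M₁ (2 * M₀) := le_max_left _ _
    exact mul_le_mul_of_nonneg_right this (Real.rpow_nonneg (norm_nonneg _) _)
  · have hB : B n s z = ‖z‖ ^ (-((n:ℝ) + s)) := min_eq_right hmin
    rw [hB]
    refine h2.trans ?_
    exact mul_le_mul_of_nonneg_right (le_max_right _ _) (Real.rpow_nonneg (norm_nonneg _) _)

lemma aesm_integrand (j : Fin n) (f : SchwartzMap (EuclideanSpace ℝ (Fin n)) F) (x : E) :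
    AEStronglyMeasurable (fun z : E => K n s j z • (f x - f (x - z))) volume := by
  have hc : Continuous fun z : E => f x - f (x - z) :=
    continuous_const.sub (f.continuous.comp (continuous_const.sub continuous_id))
  exact ((K_measurable j).aestronglyMeasurable).smul hc.aestronglyMeasurable

lemma integrable_integrand (hn : 1 ≤ n) (hs0 : 0 < s) (hs1 : s < 1) (j : Fin n)
    (f : SchwartzMap (EuclideanSpace ℝ (Fin n)) F) (x : E) :
    Integrable (fun z : E => K n s j z • (f x - f (x - z))) volume := by
  refine ((integrable_B hn hs0 hs1).const_mul
    (max (SchwartzMap.seminorm ℝ 0 1 f) (2 * SchwartzMap.seminorm ℝ 0 0 f))).mono'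
    (aesm_integrand j f x) ?_
  filter_upwards with z
  exact norm_integrand_le hn hs0 j f x z

lemma decay (hn : 1 ≤ n) (hs0 : 0 < s) (hs1 : s < 1) (j : Fin n)
    (f : SchwartzMap (EuclideanSpace ℝ (Fin n)) F) :
    ∃ C : ℝ, ∀ x : E, ‖∫ z : E, K n s j z • (f x - f (x - z))‖ ≤
      C * (1 + ‖x‖) ^ (-((n : ℝ) + s)) := by
  have hn' : (1:ℝ) ≤ (n:ℝ) := by exact_mod_cast hn
  have hν1 : 1 < (n:ℝ) + s := by linarith
  have hν0 : 0 < (n:ℝ) + s := by linarith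
  set ν : ℝ := (n:ℝ) + s with hν
  set I₁ : ℝ := ∫ z in ball (0:E) 1, ‖z‖ ^ (1 - ν) with hI₁
  set I₂ : ℝ := ∫ z in (ball (0:E) 1)ᶜ, ‖z‖ ^ (-ν) with hI₂
  have hI₁0 : 0 ≤ I₁ := setIntegral_nonneg measurableSet_ball
    (fun z _ => Real.rpow_nonneg (norm_nonneg _) _)
  have hI₂0 : 0 ≤ I₂ := setIntegral_nonneg measurableSet_ball.compl
    (fun z _ => Real.rpow_nonneg (norm_nonneg _) _)
  set S1 : ℝ := 2 ^ (n+1) *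
    ((Finset.Iic ((n+1), 1)).sup (schwartzSeminormFamily ℝ (EuclideanSpace ℝ (Fin n)) F)) f
    with hS1
  set S0 : ℝ := 2 ^ n *
    ((Finset.Iic (n, 0)).sup (schwartzSeminormFamily ℝ (EuclideanSpace ℝ (Fin n)) F)) f
    with hS0
  have hS10 : 0 ≤ S1 := by positivity
  have hS00 : 0 ≤ S0 := by positivity
  set L1 : ℝ := ∫ z : E, ‖f z‖ with hL1
  have hL10 : 0 ≤ L1 := integral_nonneg fun z => norm_nonneg _
  refine ⟨S1 * I₁ * 2 ^ ν + (S0 * I₂ * 2 ^ ν + L1 * 2 ^ ν), fun x => ?_⟩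
  have hx0 : (0:ℝ) < 1 + ‖x‖ := by positivity
  set R : ℝ := (1 + ‖x‖) / 2 with hRdef
  have hR : 0 < R := by positivity
  have hRc : ∀ c : ℝ, R ^ c = (1 + ‖x‖) ^ c * 2 ^ (-c) := by
    intro c
    rw [hRdef, div_eq_mul_inv, Real.mul_rpow hx0.le (by norm_num),
      Real.inv_rpow (by norm_num : (0:ℝ) ≤ 2), ← Real.rpow_neg (by norm_num : (0:ℝ) ≤ 2)]
  set g : E → F := fun z => K n s j z • (f x - f (x - z)) with hgdef
  have hg : Integrable g := integrable_integrand hn hs0 hs1 j f x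
  -- derivative bound on the ball around x
  have hder : ∀ y ∈ closedBall x R, ‖fderiv ℝ (⇑f) y‖ ≤ S1 * R ^ (-((n:ℝ)+1)) := by
    intro y hy
    have h1 : R ≤ 1 + ‖y‖ := by
      have h2 : ‖x - y‖ ≤ R := by
        rw [← dist_eq_norm, dist_comm]
        exact mem_closedBall.1 hy
      have h3 : ‖x‖ - ‖y‖ ≤ R := (norm_sub_norm_le x y).trans h2
      rw [hRdef] at h3 ⊢
      linarith
    have h2 := SchwartzMap.one_add_le_sup_seminorm_apply (𝕜 := ℝ) (m := ((n+1), 1))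
      (k := n+1) (n := 1) le_rfl le_rfl f y
    have h3 : ‖fderiv ℝ (⇑f) y‖ = ‖iteratedFDeriv ℝ 1 (⇑f) y‖ := by
      rw [← norm_iteratedFDeriv_fderiv, norm_iteratedFDeriv_zero]
    have h4 : R ^ ((n:ℝ)+1) ≤ (1 + ‖y‖) ^ (n+1 : ℕ) := by
      rw [← Real.rpow_natCast (1 + ‖y‖) (n+1)]
      push_cast
      exact Real.rpow_le_rpow hR.le h1 (by positivity)
    have h5 : R ^ ((n:ℝ)+1) * ‖fderiv ℝ (⇑f) y‖ ≤ S1 := by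
      rw [h3]
      calc R ^ ((n:ℝ)+1) * ‖iteratedFDeriv ℝ 1 (⇑f) y‖
          ≤ (1 + ‖y‖) ^ (n+1 : ℕ) * ‖iteratedFDeriv ℝ 1 (⇑f) y‖ :=
            mul_le_mul_of_nonneg_right h4 (norm_nonneg _)
        _ ≤ S1 := h2
    have hRp : (0:ℝ) < R ^ ((n:ℝ)+1) := Real.rpow_pos_of_pos hR _
    have h6 : ‖fderiv ℝ (⇑f) y‖ ≤ S1 / R ^ ((n:ℝ)+1) := by
      rw [le_div_iff₀ hRp, mul_comm]
      exact h5
    rwa [div_eq_mul_inv, ← Real.rpow_neg hR.le] at h6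
  -- mean value estimate
  have hMV : ∀ z ∈ ball (0:E) R, ‖f x - f (x - z)‖ ≤ (S1 * R ^ (-((n:ℝ)+1))) * ‖z‖ := by
    intro z hz
    have hz' : ‖z‖ < R := mem_ball_zero_iff.1 hz
    have hx1 : x ∈ closedBall x R := mem_closedBall_self hR.le
    have hx2 : x - z ∈ closedBall x R := by
      rw [mem_closedBall_iff_norm, sub_sub_cancel_left, norm_neg]
      exact hz'.le
    have := (convex_closedBall x R).norm_image_sub_le_of_norm_fderiv_le
      (fun y _ => f.differentiable.differentiableAt) hder hx2 hx1
    simpa [sub_sub_cancel] using this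
  -- pointwise bound on the ball
  have hb : ∀ z ∈ ball (0:E) R, ‖g z‖ ≤ (S1 * R ^ (-((n:ℝ)+1))) * ‖z‖ ^ (1-ν) := by
    intro z hz
    rw [hgdef, norm_smul, Real.norm_eq_abs]
    have hD0 : (0:ℝ) ≤ S1 * R ^ (-((n:ℝ)+1)) := by positivity
    calc |K n s j z| * ‖f x - f (x - z)‖
        ≤ ‖z‖ ^ (-ν) * ((S1 * R ^ (-((n:ℝ)+1))) * ‖z‖) :=
          mul_le_mul (abs_K_le hs0 j z) (hMV z hz) (norm_nonneg _)
            (Real.rpow_nonneg (norm_nonneg _) _)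
      _ = (S1 * R ^ (-((n:ℝ)+1))) * (‖z‖ ^ (-ν) * ‖z‖) := by ring
      _ = (S1 * R ^ (-((n:ℝ)+1))) * ‖z‖ ^ (1-ν) := by rw [rpow_mul_norm hν1]
  -- inner integral estimate
  have hIball : IntegrableOn (fun z : E => ‖z‖ ^ (1-ν)) (ball (0:E) R) :=
    integrableOn_rpow_ball hn (by rw [hν]; push_cast; linarith) (by rw [hν]; linarith) hR
  have hInner : ∫ z in ball (0:E) R, ‖g z‖ ≤ S1 * I₁ * 2 ^ ν * (1 + ‖x‖) ^ (-ν) := by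
    calc ∫ z in ball (0:E) R, ‖g z‖
        ≤ ∫ z in ball (0:E) R, (S1 * R ^ (-((n:ℝ)+1))) * ‖z‖ ^ (1-ν) :=
          setIntegral_mono_on hg.norm.integrableOn (hIball.const_mul _)
            measurableSet_ball hb
      _ = (S1 * R ^ (-((n:ℝ)+1))) * ∫ z in ball (0:E) R, ‖z‖ ^ (1-ν) :=
          integral_const_mul _ _
      _ = (S1 * R ^ (-((n:ℝ)+1))) * (R ^ ((n:ℝ) + (1-ν)) * I₁) := by
          rw [setIntegral_rpow_ball_scale (1-ν) hR]
      _ = S1 * I₁ * (R ^ (-((n:ℝ)+1)) * R ^ ((n:ℝ) + (1-ν))) := by ring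
      _ = S1 * I₁ * R ^ (-ν) := by
          rw [← Real.rpow_add hR]
          congr 1
          ring
      _ = S1 * I₁ * 2 ^ ν * (1 + ‖x‖) ^ (-ν) := by
          rw [hRc (-ν), neg_neg]
          ring
  -- outer pointwise bound
  have hbOut : ∀ z ∈ (ball (0:E) R)ᶜ,
      ‖g z‖ ≤ ‖z‖ ^ (-ν) * ‖f x‖ + R ^ (-ν) * ‖f (x - z)‖ := by
    intro z hz
    have hzR : R ≤ ‖z‖ := by
      simp only [mem_compl_iff, mem_ball_zero_iff, not_lt] at hz
      exact hz
    have hz2 : ‖z‖ ^ (-ν) ≤ R ^ (-ν) :=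
      Real.rpow_le_rpow_of_nonpos hR hzR (by linarith)
    rw [hgdef, norm_smul, Real.norm_eq_abs]
    calc |K n s j z| * ‖f x - f (x - z)‖
        ≤ ‖z‖ ^ (-ν) * (‖f x‖ + ‖f (x - z)‖) :=
          mul_le_mul (abs_K_le hs0 j z) (norm_sub_le _ _) (norm_nonneg _)
            (Real.rpow_nonneg (norm_nonneg _) _)
      _ = ‖z‖ ^ (-ν) * ‖f x‖ + ‖z‖ ^ (-ν) * ‖f (x - z)‖ := mul_add _ _ _
      _ ≤ ‖z‖ ^ (-ν) * ‖f x‖ + R ^ (-ν) * ‖f (x - z)‖ := by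
          gcongr
  -- integrabilities on the complement
  have hIcompl : IntegrableOn (fun z : E => ‖z‖ ^ (-ν)) (ball (0:E) R)ᶜ :=
    integrableOn_rpow_compl hn (by rw [hν]; linarith) hR
  have hTrans : Integrable (fun z : E => ‖f (x - z)‖) :=
    (integrable_comp_sub_left (fun y => ‖f y‖) x).2 (f.integrable (μ := volume)).norm
  have hOuter : ∫ z in (ball (0:E) R)ᶜ, ‖g z‖ ≤
      (S0 * I₂ * 2 ^ ν + L1 * 2 ^ ν) * (1 + ‖x‖) ^ (-ν) := by
    have hp1 : IntegrableOn (fun z : E => ‖z‖ ^ (-ν) * ‖f x‖) (ball (0:E) R)ᶜ :=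
      hIcompl.mul_const _
    have hp2 : IntegrableOn (fun z : E => R ^ (-ν) * ‖f (x - z)‖) (ball (0:E) R)ᶜ :=
      (hTrans.const_mul _).integrableOn
    have hfx : ‖f x‖ ≤ S0 * (1 + ‖x‖) ^ (-(n:ℝ)) := by
      have h2 := SchwartzMap.one_add_le_sup_seminorm_apply (𝕜 := ℝ) (m := (n, 0))
        (k := n) (n := 0) le_rfl le_rfl f x
      rw [norm_iteratedFDeriv_zero] at h2
      have hxp : (0:ℝ) < (1 + ‖x‖) ^ (n : ℕ) := by positivity
      have h6 : ‖f x‖ ≤ S0 / (1 + ‖x‖) ^ (n : ℕ) := by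
        rw [le_div_iff₀ hxp, mul_comm]
        exact h2
      rwa [div_eq_mul_inv, ← Real.rpow_natCast (1 + ‖x‖) n,
        ← Real.rpow_neg hx0.le] at h6
    have hterm1 : ∫ z in (ball (0:E) R)ᶜ, ‖z‖ ^ (-ν) * ‖f x‖ ≤
        S0 * I₂ * 2 ^ ν * (1 + ‖x‖) ^ (-ν) := by
      rw [integral_mul_const, setIntegral_rpow_compl_scale (-ν) hR]
      have hexp : (n:ℝ) + -ν = -s := by rw [hν]; ring
      rw [hexp]
      have hRs : R ^ (-s) = (1 + ‖x‖) ^ (-s) * 2 ^ s := by rw [hRc (-s), neg_neg]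
      have h2s : (2:ℝ) ^ s ≤ 2 ^ ν := Real.rpow_le_rpow_of_exponent_le (by norm_num)
        (by rw [hν]; linarith)
      calc R ^ (-s) * I₂ * ‖f x‖
          ≤ R ^ (-s) * I₂ * (S0 * (1 + ‖x‖) ^ (-(n:ℝ))) := by
            have : (0:ℝ) ≤ R ^ (-s) * I₂ := by positivity
            exact mul_le_mul_of_nonneg_left hfx this
        _ = ((1 + ‖x‖) ^ (-s) * 2 ^ s) * I₂ * (S0 * (1 + ‖x‖) ^ (-(n:ℝ))) := by rw [hRs]
        _ = S0 * I₂ * 2 ^ s * ((1 + ‖x‖) ^ (-(n:ℝ)) * (1 + ‖x‖) ^ (-s)) := by ring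
        _ = S0 * I₂ * 2 ^ s * (1 + ‖x‖) ^ (-ν) := by
            rw [← Real.rpow_add hx0]
            congr 1
            rw [hν]
            ring
        _ ≤ S0 * I₂ * 2 ^ ν * (1 + ‖x‖) ^ (-ν) := by
            have h3 : (0:ℝ) ≤ (1 + ‖x‖) ^ (-ν) := Real.rpow_nonneg hx0.le _
            have h4 : S0 * I₂ * 2 ^ s ≤ S0 * I₂ * 2 ^ ν := by
              have := mul_nonneg hS00 hI₂0
              exact mul_le_mul_of_nonneg_left h2s this
            exact mul_le_mul_of_nonneg_right h4 h3
    have hterm2 : ∫ z in (ball (0:E) R)ᶜ, R ^ (-ν) * ‖f (x - z)‖ ≤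
        L1 * 2 ^ ν * (1 + ‖x‖) ^ (-ν) := by
      rw [integral_const_mul]
      have hle : ∫ z in (ball (0:E) R)ᶜ, ‖f (x - z)‖ ≤ L1 := by
        have := setIntegral_le_integral (s := (ball (0:E) R)ᶜ) hTrans
          (Eventually.of_forall fun z => norm_nonneg _)
        rw [integral_sub_left_eq_self (fun y => ‖f y‖) volume x] at this
        exact this
      calc R ^ (-ν) * ∫ z in (ball (0:E) R)ᶜ, ‖f (x - z)‖
          ≤ R ^ (-ν) * L1 := by
            have : (0:ℝ) ≤ R ^ (-ν) := Real.rpow_nonneg hR.le _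
            exact mul_le_mul_of_nonneg_left hle this
        _ = L1 * 2 ^ ν * (1 + ‖x‖) ^ (-ν) := by
            rw [hRc (-ν), neg_neg]
            ring
    calc ∫ z in (ball (0:E) R)ᶜ, ‖g z‖
        ≤ ∫ z in (ball (0:E) R)ᶜ,
            (‖z‖ ^ (-ν) * ‖f x‖ + R ^ (-ν) * ‖f (x - z)‖) :=
          setIntegral_mono_on hg.norm.integrableOn (hp1.add hp2)
            measurableSet_ball.compl hbOut
      _ = (∫ z in (ball (0:E) R)ᶜ, ‖z‖ ^ (-ν) * ‖f x‖) +
            ∫ z in (ball (0:E) R)ᶜ, R ^ (-ν) * ‖f (x - z)‖ :=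
          integral_add hp1 hp2
      _ ≤ S0 * I₂ * 2 ^ ν * (1 + ‖x‖) ^ (-ν) + L1 * 2 ^ ν * (1 + ‖x‖) ^ (-ν) :=
          add_le_add hterm1 hterm2
      _ = (S0 * I₂ * 2 ^ ν + L1 * 2 ^ ν) * (1 + ‖x‖) ^ (-ν) := by ring
  calc ‖∫ z : E, g z‖ ≤ ∫ z : E, ‖g z‖ := norm_integral_le_integral_norm _
    _ = (∫ z in ball (0:E) R, ‖g z‖) + ∫ z in (ball (0:E) R)ᶜ, ‖g z‖ :=
        (integral_add_compl measurableSet_ball hg.norm).symm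
    _ ≤ S1 * I₁ * 2 ^ ν * (1 + ‖x‖) ^ (-ν) +
          (S0 * I₂ * 2 ^ ν + L1 * 2 ^ ν) * (1 + ‖x‖) ^ (-ν) :=
        add_le_add hInner hOuter
    _ = (S1 * I₁ * 2 ^ ν + (S0 * I₂ * 2 ^ ν + L1 * 2 ^ ν)) * (1 + ‖x‖) ^ (-ν) := by ring

lemma hasFDerivAt_T [CompleteSpace F] (hn : 1 ≤ n) (hs0 : 0 < s) (hs1 : s < 1) (j : Fin n)
    (f : SchwartzMap (EuclideanSpace ℝ (Fin n)) F) (x₀ : E) :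
    HasFDerivAt (fun x : E => ∫ z : E, K n s j z • (f x - f (x - z)))
      (∫ z : E, K n s j z •
        (SchwartzMap.fderivCLM ℝ E F f x₀ - SchwartzMap.fderivCLM ℝ E F f (x₀ - z))) x₀ := by
  set f' := SchwartzMap.fderivCLM ℝ E F f with hf'
  refine hasFDerivAt_integral_of_dominated_of_fderiv_le
    (F := fun (x : E) (z : E) => K n s j z • (f x - f (x - z)))
    (F' := fun (x : E) (z : E) => K n s j z • (f' x - f' (x - z)))
    (x₀ := x₀)
    (bound := fun z => max (SchwartzMap.seminorm ℝ 0 1 f')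
      (2 * SchwartzMap.seminorm ℝ 0 0 f') * B n s z)
    (ball_mem_nhds x₀ one_pos) (Eventually.of_forall fun x => aesm_integrand j f x)
    (integrable_integrand hn hs0 hs1 j f x₀)
    (aesm_integrand j f' x₀)
    (Eventually.of_forall fun z x _ => norm_integrand_le hn hs0 j f' x z)
    ((integrable_B hn hs0 hs1).const_mul _)
    (Eventually.of_forall fun z x _ => ?_)
  have h1 : HasFDerivAt (⇑f) (fderiv ℝ (⇑f) x) x :=
    f.differentiable.differentiableAt.hasFDerivAt
  have h2 : HasFDerivAt (fun w : E => w - z) (ContinuousLinearMap.id ℝ (EuclideanSpace ℝ (Fin n))) x :=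
    (hasFDerivAt_id x).sub_const z
  have h3 : HasFDerivAt (fun w : E => f (w - z)) (fderiv ℝ (⇑f) (x - z)) x := by
    have := (f.differentiable.differentiableAt (x := x - z)).hasFDerivAt.comp x h2
    simpa [Function.comp_def] using this
  have h4 : HasFDerivAt (fun w : E => K n s j z • (f w - f (w - z)))
      (K n s j z • (fderiv ℝ (⇑f) x - fderiv ℝ (⇑f) (x - z))) x := (h1.sub h3).const_smul (K n s j z)
  simpa [hf', SchwartzMap.fderivCLM_apply] using h4

lemma key (hn : 1 ≤ n) (hs0 : 0 < s) (hs1 : s < 1) (j : Fin n) :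
    ∀ (k : ℕ) {F : Type} [NormedAddCommGroup F] [NormedSpace ℝ F] [CompleteSpace F]
      (f : SchwartzMap (EuclideanSpace ℝ (Fin n)) F),
      ∃ C : ℝ, ∀ x : E,
        ‖iteratedFDeriv ℝ k (fun x : E => ∫ z : E, K n s j z • (f x - f (x - z))) x‖ ≤
          C * (1 + ‖x‖) ^ (-((n:ℝ) + s)) := by
  intro k
  induction k with
  | zero =>
    intro F _ _ _ f
    obtain ⟨C, hC⟩ := decay hn hs0 hs1 j f
    exact ⟨C, fun x => by rw [norm_iteratedFDeriv_zero]; exact hC x⟩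
  | succ k ih =>
    intro F _ _ _ f
    obtain ⟨C, hC⟩ := ih (F := EuclideanSpace ℝ (Fin n) →L[ℝ] F) (SchwartzMap.fderivCLM ℝ E F f)
    refine ⟨C, fun x => ?_⟩
    rw [← norm_iteratedFDeriv_fderiv]
    have heq : (fderiv ℝ (fun x : E => ∫ z : E, K n s j z • (f x - f (x - z)))) =
        fun x : E => ∫ z : E, K n s j z •
          (SchwartzMap.fderivCLM ℝ E F f x - SchwartzMap.fderivCLM ℝ E F f (x - z)) :=
      funext fun y => (hasFDerivAt_T hn hs0 hs1 j f y).fderiv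
    rw [heq]
    exact hC x

end Piece4

end FracAux

open MeasureTheory Real

/-- The fractional Riesz derivative `∇^s_j φ` of a Schwartz function, together with all of its
derivatives, decays like `(1+|x|)^{-(n+s)}`. -/
theorem iteratedFDeriv_fractionalRieszDeriv_decay
    (n : ℕ) (hn : 1 ≤ n) (s : ℝ) (hs0 : 0 < s) (hs1 : s < 1)
    (φ : SchwartzMap (EuclideanSpace ℝ (Fin n)) ℝ) (j : Fin n) (k : ℕ) :
    ∃ C : ℝ, ∀ x : EuclideanSpace ℝ (Fin n),
      ‖iteratedFDeriv ℝ k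
        (fun x : EuclideanSpace ℝ (Fin n) =>
          ∫ y : EuclideanSpace ℝ (Fin n),
            ((x j - y j) / ‖x - y‖) * ((φ x - φ y) / ‖x - y‖ ^ ((n : ℝ) + s))) x‖ ≤
        C * (1 + ‖x‖) ^ (-((n : ℝ) + s)) := by
  have hfun : (fun x : EuclideanSpace ℝ (Fin n) =>
          ∫ y : EuclideanSpace ℝ (Fin n),
            ((x j - y j) / ‖x - y‖) * ((φ x - φ y) / ‖x - y‖ ^ ((n : ℝ) + s))) =
      fun x : EuclideanSpace ℝ (Fin n) =>
        ∫ z : EuclideanSpace ℝ (Fin n), FracAux.K n s j z • (φ x - φ (x - z)) := by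
    funext x
    rw [← integral_sub_left_eq_self
      (fun z : EuclideanSpace ℝ (Fin n) => FracAux.K n s j z • (φ x - φ (x - z))) volume x]
    congr 1
    funext y
    show _ = FracAux.K n s j (x - y) • (φ x - φ (x - (x - y)))
    rw [sub_sub_cancel, smul_eq_mul]
    unfold FracAux.K
    rw [FracAux.sub_coord]
    ring
  rw [hfun]
  exact FracAux.key hn hs0 hs1 j k φ
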